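/- Let k be a division ring and f : k² → k² a bijection taking every affine line (left or right) to an affine line, such that the image of every purely left affine line is a purely right affine line. Then k admits an anti-automorphism, i.e., an additive bijection α : k → k with α(xy) = α(y)α(x) for all x, y. -/

import Mathlib

open Function Set

variable {k : Type*}

/-- `L` is a left affine line in `k²`. -/
def IsLeftAffLine [DivisionRing k] (L : Set (k × k)) : Prop :=
  ∃ (v : k × k) (S : Submodule k (k × k)),
    L = (v + ·) '' (S : Set (k × k)) ∧ Module.finrank k S = 1

/-- `L` is a right affine line in `k²` (right modules encoded via `kᵐᵒᵖ`). -/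
def IsRightAffLine [DivisionRing k] (L : Set (k × k)) : Prop :=
  ∃ (v : k × k) (S : Submodule kᵐᵒᵖ (k × k)),
    L = (v + ·) '' (S : Set (k × k)) ∧ Module.finrank kᵐᵒᵖ S = 1

open MulOpposite Submodule

section Aux

variable [DivisionRing k]

instance : Module.Finite kᵐᵒᵖ k := by
  refine ⟨⟨{1}, ?_⟩⟩
  rw [eq_top_iff]
  intro x _
  rw [Finset.coe_singleton, Submodule.mem_span_singleton]
  exact ⟨op x, by simp [op_smul_eq_mul]⟩

/-- right multiplication of a vector by a scalar -/
def rmul (d : k × k) (t : k) : k × k := (d.1 * t, d.2 * t)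

def lineL (v d : k × k) : Set (k × k) := {p | ∃ t : k, p = v + t • d}
def lineR (v d : k × k) : Set (k × k) := {p | ∃ t : k, p = v + rmul d t}

lemma span_singleton_set (d : k × k) :
    ((span k {d} : Submodule k (k × k)) : Set (k × k)) = ({p : k × k | ∃ t : k, p = t • d}) := by
  ext p; simp [Submodule.mem_span_singleton, eq_comm]

lemma span_singleton_set_op (d : k × k) :
    ((span kᵐᵒᵖ {d} : Submodule kᵐᵒᵖ (k × k)) : Set (k × k)) = ({p : k × k | ∃ t : k, p = rmul d t}) := by
  ext p
  simp only [SetLike.mem_coe, Submodule.mem_span_singleton, Set.mem_setOf_eq]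
  constructor
  · rintro ⟨a, rfl⟩; exact ⟨a.unop, rfl⟩
  · rintro ⟨t, rfl⟩; exact ⟨op t, rfl⟩

lemma prin_of_finrank_one {S : Submodule k (k × k)} (h : Module.finrank k S = 1) :
    ∃ d : k × k, d ≠ 0 ∧ S = span k {d} := by
  have hbot : S ≠ ⊥ := by
    intro hb; rw [hb] at h; simp at h
  obtain ⟨d, hdS, hd0⟩ := Submodule.exists_mem_ne_zero_of_ne_bot hbot
  refine ⟨d, hd0, ?_⟩
  refine (eq_of_le_of_finrank_eq ((span_le).2 (by simpa using hdS)) ?_).symm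
  rw [h, finrank_span_singleton hd0]

lemma prin_of_finrank_one_op {S : Submodule kᵐᵒᵖ (k × k)} (h : Module.finrank kᵐᵒᵖ S = 1) :
    ∃ d : k × k, d ≠ 0 ∧ S = span kᵐᵒᵖ {d} := by
  have hbot : S ≠ ⊥ := by
    intro hb; rw [hb] at h; simp at h
  obtain ⟨d, hdS, hd0⟩ := Submodule.exists_mem_ne_zero_of_ne_bot hbot
  refine ⟨d, hd0, ?_⟩
  refine (eq_of_le_of_finrank_eq ((span_le).2 (by simpa using hdS)) ?_).symm
  rw [h, finrank_span_singleton hd0]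

lemma isLeftAffLine_iff {L : Set (k × k)} :
    IsLeftAffLine L ↔ ∃ v d : k × k, d ≠ 0 ∧ L = lineL v d := by
  constructor
  · rintro ⟨v, S, rfl, hr⟩
    obtain ⟨d, hd0, rfl⟩ := prin_of_finrank_one hr
    refine ⟨v, d, hd0, ?_⟩
    rw [span_singleton_set]
    ext p
    simp only [Set.mem_image, Set.mem_setOf_eq, lineL]
    constructor
    · rintro ⟨q, ⟨t, rfl⟩, rfl⟩; exact ⟨t, rfl⟩
    · rintro ⟨t, rfl⟩; exact ⟨t • d, ⟨t, rfl⟩, rfl⟩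
  · rintro ⟨v, d, hd0, rfl⟩
    refine ⟨v, span k {d}, ?_, finrank_span_singleton hd0⟩
    rw [span_singleton_set]
    ext p
    simp only [Set.mem_image, Set.mem_setOf_eq, lineL]
    constructor
    · rintro ⟨t, rfl⟩; exact ⟨t • d, ⟨t, rfl⟩, rfl⟩
    · rintro ⟨q, ⟨t, rfl⟩, rfl⟩; exact ⟨t, rfl⟩

lemma isRightAffLine_iff {L : Set (k × k)} :
    IsRightAffLine L ↔ ∃ v d : k × k, d ≠ 0 ∧ L = lineR v d := by
  constructor
  · rintro ⟨v, S, rfl, hr⟩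
    obtain ⟨d, hd0, rfl⟩ := prin_of_finrank_one_op hr
    refine ⟨v, d, hd0, ?_⟩
    rw [span_singleton_set_op]
    ext p
    simp only [Set.mem_image, Set.mem_setOf_eq, lineR]
    constructor
    · rintro ⟨q, ⟨t, rfl⟩, rfl⟩; exact ⟨t, rfl⟩
    · rintro ⟨t, rfl⟩; exact ⟨rmul d t, ⟨t, rfl⟩, rfl⟩
  · rintro ⟨v, d, hd0, rfl⟩
    refine ⟨v, span kᵐᵒᵖ {d}, ?_, finrank_span_singleton hd0⟩
    rw [span_singleton_set_op]
    ext p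
    simp only [Set.mem_image, Set.mem_setOf_eq, lineR]
    constructor
    · rintro ⟨t, rfl⟩; exact ⟨rmul d t, ⟨t, rfl⟩, rfl⟩
    · rintro ⟨q, ⟨t, rfl⟩, rfl⟩; exact ⟨t, rfl⟩


/-- `a` is central -/
def isC (a : k) : Prop := ∀ x : k, a * x = x * a

lemma isC_zero : isC (0 : k) := fun x => by simp
lemma isC_sub {a b : k} (ha : isC a) (hb : isC b) : isC (a - b) := fun x => by
  simp [sub_mul, mul_sub, ha x, hb x]
lemma isC_mul {a b : k} (ha : isC a) (hb : isC b) : isC (a * b) := fun x => by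
  rw [mul_assoc, hb x, ← mul_assoc, ha x, mul_assoc]
lemma isC_inv {a : k} (ha : isC a) : isC a⁻¹ := by
  rcases eq_or_ne a 0 with rfl | h
  · simpa using (isC_zero : isC (0:k))
  · intro x
    calc a⁻¹ * x = a⁻¹ * (x * a * a⁻¹) := by rw [mul_assoc x a, mul_inv_cancel₀ h, mul_one]
      _ = a⁻¹ * (a * x * a⁻¹) := by rw [← ha x]
      _ = x * a⁻¹ := by rw [← mul_assoc, ← mul_assoc, inv_mul_cancel₀ h, one_mul]
lemma isC_of_add_right {a b : k} (hab : isC (a + b)) (hb : isC b) : isC a := by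
  have h := isC_sub hab hb; simpa using h

lemma infinite_k (h : ∃ a : k, ¬ isC a) : Infinite k := by
  by_contra hf
  rw [not_infinite_iff_finite] at hf
  obtain ⟨a, ha⟩ := h
  letI : Field k := littleWedderburn k
  exact ha fun x => mul_comm a x

/-- the key coset-avoidance lemma -/
lemma avoid_cosets (hnc : ∃ a : k, ¬ isC a) (s₁ s₂ t₁ t₂ p : k) (h₁ : s₁ ≠ 0) (h₂ : s₂ ≠ 0) :
    ∃ e : k, ¬ isC e ∧ (∀ z, isC z → e ≠ t₁ + s₁ * z) ∧ (∀ z, isC z → e ≠ t₂ + s₂ * z) ∧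
      e ≠ p := by
  haveI := infinite_k hnc
  by_contra hcon
  push_neg at hcon
  have H : ∀ e : k, ¬ isC e →
      (∃ z, isC z ∧ e = t₁ + s₁ * z) ∨ (∃ z, isC z ∧ e = t₂ + s₂ * z) ∨ e = p := by
    intro e he
    by_contra h
    push_neg at h
    obtain ⟨h1, h2, h3⟩ := h
    exact h3 (hcon e he (fun z hz hh => h1 z hz hh) (fun z hz hh => h2 z hz hh))
  set Z : Set k := {z | isC z} with hZdef
  by_cases hZ : Z.Finite
  · have hC1 : (((fun z => t₁ + s₁ * z) '' Z) : Set k).Finite := hZ.image _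
    have hC2 : (((fun z => t₂ + s₂ * z) '' Z) : Set k).Finite := hZ.image _
    have hbig : (Z ∪ ((fun z => t₁ + s₁ * z) '' Z) ∪ ((fun z => t₂ + s₂ * z) '' Z) ∪
        {p} : Set k).Finite := ((hZ.union hC1).union hC2).union (Set.finite_singleton p)
    obtain ⟨e, he⟩ := hbig.infinite_compl.nonempty
    simp only [Set.mem_compl_iff, Set.mem_union, Set.mem_image, Set.mem_singleton_iff,
      not_or, not_exists] at he
    obtain ⟨⟨⟨heZ, he1⟩, he2⟩, he3⟩ := he
    have heZ' : ¬ isC e := heZ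
    rcases H e heZ' with ⟨z, hz, rfl⟩ | ⟨z, hz, rfl⟩ | rfl
    · exact (he1 z) ⟨hz, rfl⟩
    · exact (he2 z) ⟨hz, rfl⟩
    · exact he3 rfl
  · have hZinf : Z.Infinite := hZ
    -- helper: an infinite "genuine coset trace" forces membership in t + Z
    have key : ∀ (e t s : k), ({z ∈ Z | ∃ ζ, isC ζ ∧ e + z = t + s * ζ}).Infinite →
        ∃ z, isC z ∧ e = t + z := by
      intro e t s hA
      obtain ⟨z, hzA⟩ := hA.nonempty
      obtain ⟨z', hz'A, hzz'⟩ : ∃ z' ∈ {z ∈ Z | ∃ ζ, isC ζ ∧ e + z = t + s * ζ}, z' ≠ z := by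
        obtain ⟨z', hz'⟩ := (hA.diff (Set.finite_singleton z)).nonempty
        exact ⟨z', hz'.1, by simpa using hz'.2⟩
      obtain ⟨hzZ, ζ, hζ, he1⟩ := hzA
      obtain ⟨hz'Z, ζ', hζ', he2⟩ := hz'A
      have hsub : z - z' = s * (ζ - ζ') := by
        have h3 : (e + z) - (e + z') = (t + s * ζ) - (t + s * ζ') := by rw [he1, he2]
        rw [add_sub_add_left_eq_sub, add_sub_add_left_eq_sub] at h3
        rw [h3, mul_sub]
      have hζζ : ζ - ζ' ≠ 0 := by
        intro hh
        rw [hh, mul_zero, sub_eq_zero] at hsub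
        exact hzz'.symm hsub
      have hsC : isC s := by
        have : s = (z - z') * (ζ - ζ')⁻¹ := by
          rw [hsub, mul_assoc, mul_inv_cancel₀ hζζ, mul_one]
        rw [this]
        exact isC_mul (isC_sub hzZ hz'Z) (isC_inv (isC_sub hζ hζ'))
      refine ⟨s * ζ - z, isC_sub (isC_mul hsC hζ) hzZ, ?_⟩
      have : e = t + s * ζ - z := eq_sub_of_add_eq he1
      rw [this, add_sub_assoc]
    -- Step 1: every noncentral element lies in (t₁ + Z) ∪ (t₂ + Z)
    have Sub1 : ∀ e : k, ¬ isC e →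
        (∃ z, isC z ∧ e = t₁ + z) ∨ (∃ z, isC z ∧ e = t₂ + z) := by
      intro e he
      set A₁ : Set k := {z ∈ Z | ∃ ζ, isC ζ ∧ e + z = t₁ + s₁ * ζ} with hA1def
      set A₂ : Set k := {z ∈ Z | ∃ ζ, isC ζ ∧ e + z = t₂ + s₂ * ζ} with hA2def
      set A₃ : Set k := {z ∈ Z | e + z = p} with hA3def
      have hcover : Z ⊆ A₁ ∪ A₂ ∪ A₃ := by
        intro z hz
        have hez : ¬ isC (e + z) := fun hc => he (isC_of_add_right hc hz)
        rcases H (e + z) hez with ⟨ζ, hζ, hh⟩ | ⟨ζ, hζ, hh⟩ | hh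
        · exact Or.inl (Or.inl ⟨hz, ζ, hζ, hh⟩)
        · exact Or.inl (Or.inr ⟨hz, ζ, hζ, hh⟩)
        · exact Or.inr ⟨hz, hh⟩
      have hA3fin : A₃.Finite := by
        apply Set.Finite.subset (Set.finite_singleton (p - e))
        rintro z ⟨_, hz⟩
        simp only [Set.mem_singleton_iff]
        exact eq_sub_of_add_eq' hz
      have hun : (A₁ ∪ A₂).Infinite := by
        apply Set.Infinite.mono _ (hZinf.diff hA3fin)
        rintro z ⟨hz, hz3⟩
        rcases hcover hz with (h | h) | h
        · exact Or.inl h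
        · exact Or.inr h
        · exact absurd h hz3
      rcases Set.infinite_union.1 hun with hA | hA
      · exact Or.inl (key e t₁ s₁ hA)
      · exact Or.inr (key e t₂ s₂ hA)
    -- Step 2: contradiction via products with a fixed noncentral element
    obtain ⟨c₀, hc₀⟩ := hnc
    have key2 : ∀ t : k, ({z ∈ Z | ∃ ζ, isC ζ ∧ z * c₀ = t + ζ}).Infinite → False := by
      intro t hB
      obtain ⟨z, hzB⟩ := hB.nonempty
      obtain ⟨z', hz'B, hzz'⟩ : ∃ z' ∈ {z ∈ Z | ∃ ζ, isC ζ ∧ z * c₀ = t + ζ}, z' ≠ z := by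
        obtain ⟨z', hz'⟩ := (hB.diff (Set.finite_singleton z)).nonempty
        exact ⟨z', hz'.1, by simpa using hz'.2⟩
      obtain ⟨hzZ, ζ, hζ, he1⟩ := hzB
      obtain ⟨hz'Z, ζ', hζ', he2⟩ := hz'B
      have hsub : (z - z') * c₀ = ζ - ζ' := by
        rw [sub_mul, he1, he2, add_sub_add_left_eq_sub]
      have hzz0 : z - z' ≠ 0 := sub_ne_zero.2 (Ne.symm hzz')
      apply hc₀
      have hc : c₀ = (z - z')⁻¹ * (ζ - ζ') := by
        rw [← hsub, ← mul_assoc, inv_mul_cancel₀ hzz0, one_mul]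
      rw [hc]
      exact isC_mul (isC_inv (isC_sub hzZ hz'Z)) (isC_sub hζ hζ')
    -- cover of Z \ {0} by the two trace sets
    set B₁ : Set k := {z ∈ Z | ∃ ζ, isC ζ ∧ z * c₀ = t₁ + ζ} with hB1def
    set B₂ : Set k := {z ∈ Z | ∃ ζ, isC ζ ∧ z * c₀ = t₂ + ζ} with hB2def
    have hcover2 : Z \ {0} ⊆ B₁ ∪ B₂ := by
      rintro z ⟨hz, hz0⟩
      have hz0' : z ≠ 0 := by simpa using hz0
      have hzc : ¬ isC (z * c₀) := by
        intro hc
        apply hc₀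
        have : c₀ = z⁻¹ * (z * c₀) := by rw [← mul_assoc, inv_mul_cancel₀ hz0', one_mul]
        rw [this]
        exact isC_mul (isC_inv hz) hc
      rcases Sub1 (z * c₀) hzc with ⟨ζ, hζ, hh⟩ | ⟨ζ, hζ, hh⟩
      · exact Or.inl ⟨hz, ζ, hζ, hh⟩
      · exact Or.inr ⟨hz, ζ, hζ, hh⟩
    have hun2 : (B₁ ∪ B₂).Infinite :=
      Set.Infinite.mono hcover2 (hZinf.diff (Set.finite_singleton 0))
    rcases Set.infinite_union.1 hun2 with hB | hB
    · exact key2 t₁ hB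
    · exact key2 t₂ hB


/-- a "good" direction: the corresponding lines through it are purely left -/
def goodd (d : k × k) : Prop := d.1 ≠ 0 ∧ ¬ isC (d.1⁻¹ * d.2)

lemma rmul_rmul (d : k × k) (r s : k) : rmul (rmul d r) s = rmul d (r * s) := by
  simp [rmul, mul_assoc]
lemma rmul_add (d : k × k) (s t : k) : rmul d (s + t) = rmul d s + rmul d t := by
  simp [rmul, mul_add, Prod.ext_iff]
lemma rmul_zero (d : k × k) : rmul d 0 = 0 := by simp [rmul, Prod.ext_iff]
lemma rmul_one (d : k × k) : rmul d 1 = d := by simp [rmul]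
lemma rmul_add_left (d e : k × k) (t : k) : rmul (d + e) t = rmul d t + rmul e t := by
  simp [rmul, add_mul, Prod.ext_iff]
lemma rmul_eq_zero {d : k × k} (hd : d ≠ 0) {t : k} (h : rmul d t = 0) : t = 0 := by
  rcases eq_or_ne t 0 with rfl | ht
  · rfl
  · exfalso; apply hd
    have h1 : d.1 * t = 0 := congrArg Prod.fst h
    have h2 : d.2 * t = 0 := congrArg Prod.snd h
    have : d.1 = 0 := by
      rcases mul_eq_zero.1 h1 with h | h
      · exact h
      · exact absurd h ht
    have : d.2 = 0 := by
      rcases mul_eq_zero.1 h2 with h | h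
      · exact h
      · exact absurd h ht
    exact Prod.ext ‹d.1 = 0› this
lemma rmul_cancel {d : k × k} (hd : d ≠ 0) {s t : k} (h : rmul d s = rmul d t) : s = t := by
  have : rmul d (s - t) = 0 := by
    rw [sub_eq_add_neg, rmul_add, h]
    have : rmul d (-t) = - rmul d t := by simp [rmul, Prod.ext_iff]
    rw [this, add_neg_cancel]
  have h0 := rmul_eq_zero hd this
  exact sub_eq_zero.1 h0

lemma smul_fst (r : k) (d : k × k) : (r • d).1 = r * d.1 := rfl
lemma smul_snd (r : k) (d : k × k) : (r • d).2 = r * d.2 := rfl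

lemma goodd.ne_zero {d : k × k} (hd : goodd d) : d ≠ 0 := by
  intro h; exact hd.1 (by rw [h]; rfl)

lemma goodd_smul {d : k × k} (hd : goodd d) {r : k} (hr : r ≠ 0) : goodd (r • d) := by
  refine ⟨by simp [smul_fst, hr, hd.1], ?_⟩
  have : (r • d).1⁻¹ * (r • d).2 = d.1⁻¹ * d.2 := by
    rw [smul_fst, smul_snd, mul_inv_rev, mul_assoc, ← mul_assoc r⁻¹ r, inv_mul_cancel₀ hr,
      one_mul]
  rw [this]
  exact hd.2

lemma smul_cancel {d : k × k} (hd : d ≠ 0) {s t : k} (h : s • d = t • d) : s = t := by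
  by_contra hst
  have hne : s - t ≠ 0 := sub_ne_zero.2 hst
  have : (s - t) • d = 0 := by rw [sub_smul, h, sub_self]
  exact hd (by rw [← one_smul k d, ← inv_mul_cancel₀ hne, mul_smul, this, smul_zero])

/-- a left line with good direction meets a "k·" set properly; membership lemmas -/
lemma mem_lineL_self (v d : k × k) : v ∈ lineL v d := ⟨0, by simp⟩
lemma mem_lineR_self (v d : k × k) : v ∈ lineR v d := ⟨0, by simp [rmul_zero]⟩

lemma lineR_change_dir {v d e : k × k} (he : e ≠ 0) {r : k} (hr : r ≠ 0) (h : d = rmul e r) :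
    lineR v d = lineR v e := by
  ext p
  constructor
  · rintro ⟨t, rfl⟩; exact ⟨r * t, by rw [h, rmul_rmul]⟩
  · rintro ⟨t, rfl⟩
    refine ⟨r⁻¹ * t, ?_⟩
    rw [h, rmul_rmul, ← mul_assoc, mul_inv_cancel₀ hr, one_mul]

lemma lineR_change_base {v e x : k × k} (hx : x ∈ lineR v e) : lineR v e = lineR x e := by
  obtain ⟨t₁, rfl⟩ := hx
  ext p
  constructor
  · rintro ⟨t, rfl⟩
    refine ⟨t - t₁, ?_⟩
    show v + rmul e t = v + rmul e t₁ + rmul e (t - t₁)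
    rw [add_assoc, ← rmul_add]
    congr 2
    abel
  · rintro ⟨t, rfl⟩
    exact ⟨t₁ + t, by rw [rmul_add]; abel⟩

/-- two right lines either meet or are parallel -/
lemma lines_meet {w d e : k × k} (hd : d ≠ 0) (he : e ≠ 0) (hne : ∀ r : k, d ≠ rmul e r) :
    ∃ s t : k, w + rmul d s = rmul e t := by
  by_cases hd1 : d.1 = 0
  · have hd2 : d.2 ≠ 0 := by
      intro h2; exact hd (Prod.ext hd1 h2)
    by_cases he1 : e.1 = 0
    · exfalso
      have he2 : e.2 ≠ 0 := fun h2 => he (Prod.ext he1 h2)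
      exact hne (e.2⁻¹ * d.2) (Prod.ext (by simp [rmul, hd1, he1])
        (by simp [rmul, ← mul_assoc, mul_inv_cancel₀ he2]))
    · refine ⟨d.2⁻¹ * (e.2 * (e.1⁻¹ * w.1) - w.2), e.1⁻¹ * w.1, ?_⟩
      apply Prod.ext
      · show w.1 + d.1 * _ = e.1 * (e.1⁻¹ * w.1)
        rw [hd1, zero_mul, add_zero, ← mul_assoc, mul_inv_cancel₀ he1, one_mul]
      · show w.2 + d.2 * (d.2⁻¹ * (e.2 * (e.1⁻¹ * w.1) - w.2)) = e.2 * (e.1⁻¹ * w.1)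
        rw [← mul_assoc, mul_inv_cancel₀ hd2, one_mul]
        abel
  · -- d.1 ≠ 0
    set a : k := d.2 * d.1⁻¹ * e.1 - e.2 with ha
    have ha0 : a ≠ 0 := by
      intro h0
      have he2 : e.2 = d.2 * d.1⁻¹ * e.1 := by
        exact (sub_eq_zero.1 h0).symm
      have : e = rmul d (d.1⁻¹ * e.1) := by
        apply Prod.ext
        · show e.1 = d.1 * (d.1⁻¹ * e.1)
          rw [← mul_assoc, mul_inv_cancel₀ hd1, one_mul]
        · show e.2 = d.2 * (d.1⁻¹ * e.1)
          rw [he2, mul_assoc]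
      -- then d = rmul e of the inverse, contradiction
      have hde1 : d.1⁻¹ * e.1 ≠ 0 := by
        intro hh
        exact he (by rw [this, hh, rmul_zero])
      have key : ∀ r : k, r ≠ 0 → e = rmul d r → d = rmul e r⁻¹ := by
        intro r hr hh
        rw [hh, rmul_rmul, mul_inv_cancel₀ hr, rmul_one]
      exact hne _ (key _ hde1 this)
    refine ⟨d.1⁻¹ * (e.1 * (a⁻¹ * (d.2 * d.1⁻¹ * w.1 - w.2)) - w.1),
      a⁻¹ * (d.2 * d.1⁻¹ * w.1 - w.2), ?_⟩
    set t : k := a⁻¹ * (d.2 * d.1⁻¹ * w.1 - w.2) with hts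
    have hat : a * t = d.2 * d.1⁻¹ * w.1 - w.2 := by
      rw [hts, ← mul_assoc, mul_inv_cancel₀ ha0, one_mul]
    apply Prod.ext
    · show w.1 + d.1 * (d.1⁻¹ * (e.1 * t - w.1)) = e.1 * t
      rw [← mul_assoc, mul_inv_cancel₀ hd1, one_mul]
      abel
    · show w.2 + d.2 * (d.1⁻¹ * (e.1 * t - w.1)) = e.2 * t
      have expand : d.2 * (d.1⁻¹ * (e.1 * t - w.1)) =
          d.2 * d.1⁻¹ * e.1 * t - d.2 * d.1⁻¹ * w.1 := by
        simp [mul_sub, mul_assoc]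
      rw [expand]
      have : d.2 * d.1⁻¹ * e.1 * t = a * t + e.2 * t := by
        rw [ha, sub_mul]; abel
      rw [this, hat]
      abel

lemma isLeft_translate {L : Set (k × k)} (w : k × k) (h : IsLeftAffLine L) :
    IsLeftAffLine ((w + ·) '' L) := by
  obtain ⟨v, S, rfl, hr⟩ := h
  refine ⟨w + v, S, ?_, hr⟩
  rw [← Set.image_comp]
  congr 1
  funext s
  simp [add_assoc]

lemma isRight_translate {L : Set (k × k)} (w : k × k) (h : IsRightAffLine L) :
    IsRightAffLine ((w + ·) '' L) := by
  obtain ⟨v, S, rfl, hr⟩ := h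
  refine ⟨w + v, S, ?_, hr⟩
  rw [← Set.image_comp]
  congr 1
  funext s
  simp [add_assoc]

lemma lineL_translate (w v d : k × k) : (w + ·) '' lineL v d = lineL (w + v) d := by
  ext p
  simp only [Set.mem_image, lineL, Set.mem_setOf_eq]
  constructor
  · rintro ⟨q, ⟨t, rfl⟩, rfl⟩; exact ⟨t, by rw [add_assoc]⟩
  · rintro ⟨t, rfl⟩; exact ⟨v + t • d, ⟨t, rfl⟩, by rw [add_assoc]⟩

/-- a left line with good direction is not a right line -/
lemma goodd_not_right {d : k × k} (hd : goodd d) (v : k × k) :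
    ¬ IsRightAffLine (lineL v d) := by
  intro h
  have h0 : IsRightAffLine ((-v + ·) '' lineL v d) := isRight_translate _ h
  rw [lineL_translate, neg_add_cancel] at h0
  obtain ⟨v', d', hd'0, heq⟩ := isRightAffLine_iff.1 h0
  have h0mem : (0 : k × k) ∈ lineR v' d' := by
    rw [← heq]; exact ⟨0, by simp⟩
  have heq2 : lineL 0 d = lineR 0 d' := by
    rw [heq, lineR_change_base h0mem]
  have hdmem : d ∈ lineR 0 d' := by
    rw [← heq2]; exact ⟨1, by simp⟩
  obtain ⟨r, hdr⟩ := hdmem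
  rw [zero_add] at hdr
  have hr0 : r ≠ 0 := by
    rintro rfl
    exact hd.ne_zero (by rw [hdr, rmul_zero])
  have hd'd : d' = rmul d r⁻¹ := by
    rw [hdr, rmul_rmul, mul_inv_cancel₀ hr0, rmul_one]
  have heq3 : lineL 0 d = lineR 0 d := by
    rw [heq2, lineR_change_dir hd.ne_zero (inv_ne_zero hr0) hd'd]
  -- now extract centrality of the slope
  apply hd.2
  have main : ∀ t : k, t * d.2 = d.2 * (d.1⁻¹ * (t * d.1)) := by
    intro t
    have : (t • d) ∈ lineR 0 d := by rw [← heq3]; exact ⟨t, by simp⟩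
    obtain ⟨s, hs⟩ := this
    rw [zero_add] at hs
    have h1 : t * d.1 = d.1 * s := congrArg Prod.fst hs
    have h2 : t * d.2 = d.2 * s := congrArg Prod.snd hs
    have hs' : s = d.1⁻¹ * (t * d.1) := by
      rw [h1, ← mul_assoc, inv_mul_cancel₀ hd.1, one_mul]
    rw [h2, hs']
  intro y
  have := main (d.1 * y * d.1⁻¹)
  have hleft : d.1 * y * d.1⁻¹ * d.2 = d.1 * (y * (d.1⁻¹ * d.2)) := by
    simp [mul_assoc]
  have hright : d.2 * (d.1⁻¹ * (d.1 * y * d.1⁻¹ * d.1)) = d.2 * y := by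
    have h4 : d.1 * y * d.1⁻¹ * d.1 = d.1 * y := by
      rw [mul_assoc, inv_mul_cancel₀ hd.1, mul_one]
    rw [h4, inv_mul_cancel_left₀ hd.1]
  rw [hleft, hright] at this
  -- this : d.1 * (y * (d.1⁻¹ * d.2)) = d.2 * y
  have h5 : y * (d.1⁻¹ * d.2) = d.1⁻¹ * (d.2 * y) := by
    rw [← this, inv_mul_cancel_left₀ hd.1]
  rw [h5, mul_assoc]

lemma goodd_left {d : k × k} (hd : goodd d) (v : k × k) : IsLeftAffLine (lineL v d) :=
  isLeftAffLine_iff.2 ⟨v, d, hd.ne_zero, rfl⟩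

lemma right_line_structure {M : Set (k × k)} (hM : IsRightAffLine M) {x : k × k}
    (h0 : (0 : k × k) ∈ M) (hx : x ∈ M) (hx0 : x ≠ 0) : M = lineR 0 x := by
  obtain ⟨v, d, hd, rfl⟩ := isRightAffLine_iff.1 hM
  have heq : lineR v d = lineR 0 d := lineR_change_base h0
  rw [heq] at hx ⊢
  obtain ⟨r, hxr⟩ := hx
  rw [zero_add] at hxr
  have hr0 : r ≠ 0 := by
    rintro rfl
    exact hx0 (by rw [hxr, rmul_zero])
  have hdx : d = rmul x r⁻¹ := by
    rw [hxr, rmul_rmul, mul_inv_cancel₀ hr0, rmul_one]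
  exact lineR_change_dir hx0 (inv_ne_zero hr0) hdx

lemma parallel_of_disjoint {M : Set (k × k)} (hM : IsRightAffLine M) {e : k × k} (he : e ≠ 0)
    (hdisj : ∀ p ∈ M, p ∉ lineR 0 e) {x : k × k} (hx : x ∈ M) : M = lineR x e := by
  obtain ⟨v, d, hd, rfl⟩ := isRightAffLine_iff.1 hM
  have hpar : ∃ r : k, d = rmul e r := by
    by_contra h
    push_neg at h
    obtain ⟨s, t, hst⟩ := lines_meet (w := v) hd he h
    exact hdisj _ ⟨s, rfl⟩ ⟨t, by rw [← hst, zero_add]⟩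
  obtain ⟨r, hr⟩ := hpar
  have hr0 : r ≠ 0 := by
    rintro rfl
    exact hd (by rw [hr, rmul_zero])
  rw [lineR_change_dir he hr0 hr] at hx ⊢
  exact lineR_change_base hx

lemma rmul_sub (d : k × k) (s t : k) : rmul d (s - t) = rmul d s - rmul d t := by
  simp [rmul, mul_sub, Prod.ext_iff]

lemma ind_symm {u w : k × k} (hu : u ≠ 0) (h : ∀ r : k, w ≠ r • u) : ∀ r : k, u ≠ r • w := by
  intro r hq
  rcases eq_or_ne r 0 with rfl | hr
  · rw [zero_smul] at hq; exact hu hq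
  · exact h r⁻¹ (by rw [hq, smul_smul, inv_mul_cancel₀ hr, one_smul])

lemma ind_plain {u w : k × k} (h : ∀ r : k, u ≠ r • w) {a : k} (ha : a ≠ 0) :
    ∀ q : k, a • u ≠ q • w := by
  intro q hq
  exact h (a⁻¹ * q) (by rw [mul_smul, ← hq, smul_smul, inv_mul_cancel₀ ha, one_smul])

lemma ind_smul' {u v : k × k} (huv : ∀ r : k, u ≠ r • v) {a : k} (ha : a ≠ 0) (b : k) :
    ∀ q : k, a • u ≠ q • (b • v) := by
  intro q h
  apply huv (a⁻¹ * (q * b))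
  calc u = a⁻¹ • (a • u) := by rw [smul_smul, inv_mul_cancel₀ ha, one_smul]
    _ = a⁻¹ • (q • b • v) := by rw [h]
    _ = (a⁻¹ * (q * b)) • v := by rw [smul_smul, smul_smul, mul_assoc]

/-- avoidance: a good shift avoiding a line and keeping two translates good -/
lemma exists_good_shift (hnc : ∃ a : k, ¬ isC a) (a b u : k × k) (hu : u ≠ 0) :
    ∃ w : k × k, goodd w ∧ goodd (a + w) ∧ goodd (b + w) ∧ ∀ r : k, w ≠ r • u := by
  haveI := infinite_k hnc
  have hfin : ({0, -a.1, -b.1} : Set k).Finite :=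
    (Set.finite_singleton _).insert _ |>.insert _
  obtain ⟨x, hx⟩ := hfin.infinite_compl.nonempty
  simp only [Set.mem_compl_iff, Set.mem_insert_iff, Set.mem_singleton_iff, not_or] at hx
  obtain ⟨hx0, hxa, hxb⟩ := hx
  have hax : a.1 + x ≠ 0 := fun h => hxa (eq_neg_of_add_eq_zero_right h)
  have hbx : b.1 + x ≠ 0 := fun h => hxb (eq_neg_of_add_eq_zero_right h)
  obtain ⟨e, he, he1, he2, hep⟩ := avoid_cosets hnc (x⁻¹ * (a.1 + x)) (x⁻¹ * (b.1 + x))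
    (-(x⁻¹ * a.2)) (-(x⁻¹ * b.2)) (u.1⁻¹ * u.2)
    (mul_ne_zero (inv_ne_zero hx0) hax) (mul_ne_zero (inv_ne_zero hx0) hbx)
  refine ⟨(x, x * e), ⟨hx0, ?_⟩, ⟨hax, ?_⟩, ⟨hbx, ?_⟩, ?_⟩
  · show ¬ isC (x⁻¹ * (x * e))
    rw [inv_mul_cancel_left₀ hx0]
    exact he
  · show ¬ isC ((a + (x, x * e)).1⁻¹ * (a + (x, x * e)).2)
    intro hz
    set z := (a.1 + x)⁻¹ * (a.2 + x * e) with hzdef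
    have hz' : a.2 + x * e = (a.1 + x) * z := by
      rw [hzdef, mul_inv_cancel_left₀ hax]
    apply he1 z hz
    have hxe : x * e = (a.1 + x) * z - a.2 := by rw [← hz']; abel
    have : e = x⁻¹ * ((a.1 + x) * z - a.2) := by rw [← hxe, inv_mul_cancel_left₀ hx0]
    rw [this, mul_sub, ← mul_assoc, sub_eq_neg_add]
  · show ¬ isC ((b + (x, x * e)).1⁻¹ * (b + (x, x * e)).2)
    intro hz
    set z := (b.1 + x)⁻¹ * (b.2 + x * e) with hzdef
    have hz' : b.2 + x * e = (b.1 + x) * z := by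
      rw [hzdef, mul_inv_cancel_left₀ hbx]
    apply he2 z hz
    have hxe : x * e = (b.1 + x) * z - b.2 := by rw [← hz']; abel
    have : e = x⁻¹ * ((b.1 + x) * z - b.2) := by rw [← hxe, inv_mul_cancel_left₀ hx0]
    rw [this, mul_sub, ← mul_assoc, sub_eq_neg_add]
  · intro r h
    have h1 : x = r * u.1 := congrArg Prod.fst h
    have h2 : x * e = r * u.2 := congrArg Prod.snd h
    by_cases hu1 : u.1 = 0
    · rw [hu1, mul_zero] at h1; exact hx0 h1
    · apply hep
      have hr : r = x * u.1⁻¹ := by rw [h1, mul_assoc, mul_inv_cancel₀ hu1, mul_one]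
      have : x * e = x * (u.1⁻¹ * u.2) := by rw [h2, hr, mul_assoc]
      exact mul_left_cancel₀ hx0 this

section MainMap
variable {g : k × k → k × k}

lemma hgne (hgbij : Function.Bijective g) (hg0 : g 0 = 0) {d : k × k} (hd : d ≠ 0) :
    g d ≠ 0 := fun h => hd (hgbij.1 (h.trans hg0.symm))

lemma himg_span (hgbij : Function.Bijective g) (hg0 : g 0 = 0)
    (hgpure : ∀ L : Set (k × k), IsLeftAffLine L → ¬ IsRightAffLine L →
      IsRightAffLine (g '' L))
    {d : k × k} (hd : goodd d) : g '' lineL 0 d = lineR 0 (g d) := by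
  have hR : IsRightAffLine (g '' lineL 0 d) :=
    hgpure _ (goodd_left hd 0) (goodd_not_right hd 0)
  apply right_line_structure hR
  · exact ⟨0, ⟨0, by simp⟩, hg0⟩
  · exact ⟨d, ⟨1, by simp⟩, rfl⟩
  · exact hgne hgbij hg0 hd.ne_zero

lemma himg_line (hgbij : Function.Bijective g) (hg0 : g 0 = 0)
    (hgpure : ∀ L : Set (k × k), IsLeftAffLine L → ¬ IsRightAffLine L →
      IsRightAffLine (g '' L))
    {u v : k × k} (hu : goodd u) (hv : goodd v) (huv : ∀ r : k, u ≠ r • v) :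
    g '' lineL u v = lineR (g u) (g v) := by
  have hR : IsRightAffLine (g '' lineL u v) :=
    hgpure _ (goodd_left hv u) (goodd_not_right hv u)
  have hgv0 : g v ≠ 0 := hgne hgbij hg0 hv.ne_zero
  have hdisj : ∀ p ∈ g '' lineL u v, p ∉ lineR 0 (g v) := by
    intro p hp hp2
    rw [← himg_span hgbij hg0 hgpure hv] at hp2
    obtain ⟨q, ⟨t, rfl⟩, hqp⟩ := hp
    obtain ⟨q', ⟨t', rfl⟩, hq'p⟩ := hp2
    have hqq : (u + t • v : k × k) = 0 + t' • v := hgbij.1 (hqp.trans hq'p.symm)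
    rw [zero_add] at hqq
    apply huv (t' - t)
    rw [sub_smul, ← hqq]
    abel
  exact parallel_of_disjoint hR hgv0 hdisj ⟨u, ⟨0, by simp⟩, rfl⟩

lemma hRI (hgbij : Function.Bijective g) (hg0 : g 0 = 0)
    (hgpure : ∀ L : Set (k × k), IsLeftAffLine L → ¬ IsRightAffLine L →
      IsRightAffLine (g '' L))
    {u v : k × k} (hu : goodd u) (hv : goodd v) (huv : ∀ r : k, u ≠ r • v)
    (hvu : ∀ r : k, v ≠ r • u) {x y : k}
    (h : rmul (g u) x = rmul (g v) y) : x = 0 ∧ y = 0 := by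
  have hgu0 : g u ≠ 0 := hgne hgbij hg0 hu.ne_zero
  have hy : y = 0 := by
    by_contra hy0
    have hgv : g v = rmul (g u) (x * y⁻¹) := by
      rw [← rmul_rmul, h, rmul_rmul, mul_inv_cancel₀ hy0, rmul_one]
    have : g v ∈ lineR 0 (g u) := ⟨x * y⁻¹, by rw [zero_add, hgv]⟩
    rw [← himg_span hgbij hg0 hgpure hu] at this
    obtain ⟨q, ⟨t, rfl⟩, hq⟩ := this
    have : (0 + t • u : k × k) = v := hgbij.1 hq
    rw [zero_add] at this
    exact hvu t this.symm
  refine ⟨?_, hy⟩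
  rw [hy, rmul_zero] at h
  exact rmul_eq_zero hgu0 h

lemma hadd_ind (hgbij : Function.Bijective g) (hg0 : g 0 = 0)
    (hgpure : ∀ L : Set (k × k), IsLeftAffLine L → ¬ IsRightAffLine L →
      IsRightAffLine (g '' L))
    {u v : k × k} (hu : goodd u) (hv : goodd v) (huv : ∀ r : k, u ≠ r • v)
    (hvu : ∀ r : k, v ≠ r • u) : g (u + v) = g u + g v := by
  have h1 : g (u + v) ∈ lineR (g u) (g v) := by
    rw [← himg_line hgbij hg0 hgpure hu hv huv]
    exact ⟨u + v, ⟨1, by rw [one_smul]⟩, rfl⟩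
  have h2 : g (u + v) ∈ lineR (g v) (g u) := by
    rw [← himg_line hgbij hg0 hgpure hv hu hvu]
    exact ⟨u + v, ⟨1, by rw [one_smul, add_comm]⟩, rfl⟩
  obtain ⟨s, hs⟩ := h1
  obtain ⟨t, ht⟩ := h2
  have heq : g u + rmul (g v) s = g v + rmul (g u) t := by rw [← hs, ← ht]
  have hsub : rmul (g u) (1 - t) = rmul (g v) (1 - s) := by
    rw [rmul_sub, rmul_sub, rmul_one, rmul_one]
    exact sub_eq_sub_iff_add_eq_add.2 heq
  obtain ⟨h1t, h1s⟩ := hRI hgbij hg0 hgpure hu hv huv hvu hsub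
  have hs1 : s = 1 := by
    have := sub_eq_zero.1 h1s; exact this.symm
  rw [hs, hs1, rmul_one]

end MainMap

section MainMap2
variable {g : k × k → k × k}

lemma hadd_line (hnc : ∃ a : k, ¬ isC a) (hgbij : Function.Bijective g) (hg0 : g 0 = 0)
    (hgpure : ∀ L : Set (k × k), IsLeftAffLine L → ¬ IsRightAffLine L →
      IsRightAffLine (g '' L))
    {u : k × k} (hu : goodd u) (s t : k) :
    g ((s + t) • u) = g (s • u) + g (t • u) := by
  rcases eq_or_ne s 0 with rfl | hs
  · rw [zero_add, zero_smul, hg0, zero_add]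
  rcases eq_or_ne t 0 with rfl | ht
  · rw [add_zero, zero_smul, hg0, add_zero]
  obtain ⟨w, hw, htw, _, hwu⟩ := exists_good_shift hnc (t • u) (t • u) u hu.ne_zero
  have hu0 : u ≠ 0 := hu.ne_zero
  have huw : ∀ r : k, u ≠ r • w := ind_symm hu0 hwu
  -- (A) : g (t•u + w) = g (t•u) + g w
  have hA : g (t • u + w) = g (t • u) + g w :=
    hadd_ind hgbij hg0 hgpure (goodd_smul hu ht) hw (ind_plain huw ht)
      (fun r h => hwu (r * t) (by rw [mul_smul]; exact h))
  -- (B) : g (s•u + (t•u + w)) = g (s•u) + g (t•u + w)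
  have hBl : ∀ r : k, s • u ≠ r • (t • u + w) := by
    intro r h
    rcases eq_or_ne r 0 with rfl | hr
    · rw [zero_smul] at h
      exact hu0 (by simpa [smul_eq_zero, hs] using h)
    · apply hwu (r⁻¹ * s - t)
      have : t • u + w = (r⁻¹ * s) • u := by
        rw [mul_smul, h, smul_smul, inv_mul_cancel₀ hr, one_smul]
      rw [sub_smul, ← this]
      abel
  have hBr : ∀ r : k, t • u + w ≠ r • (s • u) := by
    intro r h
    apply hwu (r * s - t)
    have : t • u + w = (r * s) • u := by rw [mul_smul]; exact h
    rw [sub_smul, ← this]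
    abel
  have hB : g (s • u + (t • u + w)) = g (s • u) + g (t • u + w) :=
    hadd_ind hgbij hg0 hgpure (goodd_smul hu hs) htw hBl hBr
  have e2 : s • u + (t • u + w) = (s + t) • u + w := by rw [add_smul]; abel
  rcases eq_or_ne (s + t) 0 with hst | hst
  · -- degenerate: (s+t) • u = 0
    have hzero : s • u + (t • u + w) = w := by rw [e2, hst, zero_smul, zero_add]
    have : g w = g (s • u) + (g (t • u) + g w) := by
      rw [← hA, ← hB, hzero]
    rw [← add_assoc] at this
    have h0 : g (s • u) + g (t • u) = 0 := right_eq_add.1 this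
    rw [hst, zero_smul, hg0, h0]
  · have hC : g ((s + t) • u + w) = g ((s + t) • u) + g w :=
      hadd_ind hgbij hg0 hgpure (goodd_smul hu hst) hw (ind_plain huw hst)
        (fun r h => hwu (r * (s + t)) (by rw [mul_smul]; exact h))
    have e1 : g ((s + t) • u) + g w = g (s • u) + (g (t • u) + g w) := by
      rw [← hC, ← e2, hB, hA]
    rw [← add_assoc] at e1
    exact add_right_cancel e1

end MainMap2

open Classical in
noncomputable def sig (g : k × k → k × k) (u : k × k) (s : k) : k :=
  if h : ∃ c : k, g (s • u) = rmul (g u) c then h.choose else 0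

section Sig
variable {g : k × k → k × k}

lemma sig_eq {u : k × k} (hgu : g u ≠ 0) {s c : k} (hc : g (s • u) = rmul (g u) c) :
    sig g u s = c := by
  have hex : ∃ c : k, g (s • u) = rmul (g u) c := ⟨c, hc⟩
  classical
  rw [sig, dif_pos hex]
  exact rmul_cancel hgu (hex.choose_spec.symm.trans hc)

variable (hgbij : Function.Bijective g) (hg0 : g 0 = 0)
  (hgpure : ∀ L : Set (k × k), IsLeftAffLine L → ¬ IsRightAffLine L →
      IsRightAffLine (g '' L))

include hgbij hg0 hgpure

lemma sig_spec {u : k × k} (hu : goodd u) (s : k) :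
    g (s • u) = rmul (g u) (sig g u s) := by
  have hmem : g (s • u) ∈ lineR 0 (g u) := by
    rw [← himg_span hgbij hg0 hgpure hu]
    exact ⟨s • u, ⟨s, (zero_add _).symm⟩, rfl⟩
  obtain ⟨c, hc⟩ := hmem
  rw [zero_add] at hc
  rw [sig_eq (hgne hgbij hg0 hu.ne_zero) hc]
  exact hc

lemma sig_zero {u : k × k} (hu : goodd u) : sig g u 0 = 0 :=
  sig_eq (hgne hgbij hg0 hu.ne_zero) (by rw [zero_smul, hg0, rmul_zero])

lemma sig_one {u : k × k} (hu : goodd u) : sig g u 1 = 1 :=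
  sig_eq (hgne hgbij hg0 hu.ne_zero) (by rw [one_smul, rmul_one])

lemma sig_ne_zero {u : k × k} (hu : goodd u) {s : k} (hs : s ≠ 0) : sig g u s ≠ 0 := by
  intro h
  have hsp := sig_spec hgbij hg0 hgpure hu s
  rw [h, rmul_zero] at hsp
  have hzero : s • u = 0 := hgbij.1 (hsp.trans hg0.symm)
  have : u = 0 := by
    calc u = s⁻¹ • (s • u) := by rw [smul_smul, inv_mul_cancel₀ hs, one_smul]
      _ = 0 := by rw [hzero, smul_zero]
  exact hu.ne_zero this

lemma sig_inj {u : k × k} (hu : goodd u) : Function.Injective (sig g u) := by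
  intro s s' h
  have h2 : g (s • u) = g (s' • u) := by
    rw [sig_spec hgbij hg0 hgpure hu s, sig_spec hgbij hg0 hgpure hu s', h]
  exact smul_cancel hu.ne_zero (hgbij.1 h2)

lemma sig_surj {u : k × k} (hu : goodd u) : Function.Surjective (sig g u) := by
  intro c
  have hmem : rmul (g u) c ∈ lineR 0 (g u) := ⟨c, (zero_add _).symm⟩
  rw [← himg_span hgbij hg0 hgpure hu] at hmem
  obtain ⟨q, ⟨s, hs⟩, hgq⟩ := hmem
  rw [zero_add] at hs
  exact ⟨s, sig_eq (hgne hgbij hg0 hu.ne_zero) (by rw [← hs, hgq])⟩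

lemma sig_add (hnc : ∃ a : k, ¬ isC a) {u : k × k} (hu : goodd u) (s t : k) :
    sig g u (s + t) = sig g u s + sig g u t := by
  apply sig_eq (hgne hgbij hg0 hu.ne_zero)
  rw [hadd_line hnc hgbij hg0 hgpure hu s t, sig_spec hgbij hg0 hgpure hu s,
    sig_spec hgbij hg0 hgpure hu t, rmul_add]

lemma sig_key {u v : k × k} (hu : goodd u) (hv : goodd v)
    (huv : ∀ r : k, u ≠ r • v) (hvu : ∀ r : k, v ≠ r • u) {s t : k} (hs : s ≠ 0) (ht : t ≠ 0)
    (hw : goodd (s • u + t • v)) (r : k) :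
    (sig g u s)⁻¹ * sig g u (r * s) = (sig g v t)⁻¹ * sig g v (r * t) := by
  rcases eq_or_ne r 0 with rfl | hr
  · rw [zero_mul, zero_mul, sig_zero hgbij hg0 hgpure hu, sig_zero hgbij hg0 hgpure hv,
      mul_zero, mul_zero]
  set w : k × k := s • u + t • v with hwdef
  have hdec : ∀ r' : k, r' ≠ 0 →
      g (r' • w) = rmul (g u) (sig g u (r' * s)) + rmul (g v) (sig g v (r' * t)) := by
    intro r' hr'
    have hsplit : r' • w = (r' * s) • u + (r' * t) • v := by
      rw [hwdef, smul_add, smul_smul, smul_smul]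
    rw [hsplit, hadd_ind hgbij hg0 hgpure (goodd_smul hu (mul_ne_zero hr' hs))
      (goodd_smul hv (mul_ne_zero hr' ht)) (ind_smul' huv (mul_ne_zero hr' hs) (r' * t))
      (ind_smul' hvu (mul_ne_zero hr' ht) (r' * s)),
      sig_spec hgbij hg0 hgpure hu (r' * s), sig_spec hgbij hg0 hgpure hv (r' * t)]
  have hgw : g w = rmul (g u) (sig g u s) + rmul (g v) (sig g v t) := by
    have h1 := hdec 1 one_ne_zero
    rwa [one_smul, one_mul, one_mul] at h1
  have hmem : g (r • w) ∈ lineR 0 (g w) := by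
    rw [← himg_span hgbij hg0 hgpure hw]
    exact ⟨r • w, ⟨r, (zero_add _).symm⟩, rfl⟩
  obtain ⟨ρ, hρ⟩ := hmem
  rw [zero_add] at hρ
  rw [hdec r hr, hgw, rmul_add_left, rmul_rmul, rmul_rmul] at hρ
  have hdiff : rmul (g u) (sig g u (r * s) - sig g u s * ρ) =
      rmul (g v) (sig g v t * ρ - sig g v (r * t)) := by
    rw [rmul_sub, rmul_sub]
    exact sub_eq_sub_iff_add_eq_add.2 (hρ.trans (add_comm _ _))
  obtain ⟨hx, hy⟩ := hRI hgbij hg0 hgpure hu hv huv hvu hdiff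
  have h1 : sig g u (r * s) = sig g u s * ρ := sub_eq_zero.1 hx
  have h2 : sig g v (r * t) = sig g v t * ρ := (sub_eq_zero.1 hy).symm
  rw [h1, h2, inv_mul_cancel_left₀ (sig_ne_zero hgbij hg0 hgpure hu hs),
    inv_mul_cancel_left₀ (sig_ne_zero hgbij hg0 hgpure hv ht)]

lemma sig_antimul (hnc : ∃ a : k, ¬ isC a) {u : k × k} (hu : goodd u) (r s : k) :
    sig g u (r * s) = sig g u s * sig g u r := by
  rcases eq_or_ne s 0 with rfl | hs
  · rw [mul_zero, sig_zero hgbij hg0 hgpure hu, zero_mul]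
  obtain ⟨w, hw, hsw, h1w, hwu⟩ := exists_good_shift hnc (s • u) u u hu.ne_zero
  have huw : ∀ q : k, u ≠ q • w := ind_symm hu.ne_zero hwu
  have e1 := sig_key hgbij hg0 hgpure hu hw huw hwu hs one_ne_zero
    (by rw [one_smul]; exact hsw) r
  have e2 := sig_key hgbij hg0 hgpure hu hw huw hwu one_ne_zero one_ne_zero
    (by rw [one_smul, one_smul]; exact h1w) r
  have e3 : (sig g u s)⁻¹ * sig g u (r * s) = sig g u r := by
    rw [e1, ← e2, sig_one hgbij hg0 hgpure hu, inv_one, one_mul, mul_one]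
  calc sig g u (r * s) = sig g u s * ((sig g u s)⁻¹ * sig g u (r * s)) := by
        rw [mul_inv_cancel_left₀ (sig_ne_zero hgbij hg0 hgpure hu hs)]
    _ = sig g u s * sig g u r := by rw [e3]

end Sig

end Aux

/-- Lemma 8 (antiaut): if a bijection of `k²` takes affine lines to affine lines and
every purely left affine line to a purely right one, then `k` has an anti-automorphism. -/
theorem stmt_12 [DivisionRing k] (f : k × k → k × k)
    (hbij : Function.Bijective f)
    (hline : ∀ L : Set (k × k), (IsLeftAffLine L ∨ IsRightAffLine L) →
      (IsLeftAffLine (f '' L) ∨ IsRightAffLine (f '' L)))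
    (hpure : ∀ L : Set (k × k), IsLeftAffLine L → ¬ IsRightAffLine L →
      (IsRightAffLine (f '' L) ∧ ¬ IsLeftAffLine (f '' L))) :
    ∃ α : k → k, Function.Bijective α ∧ (∀ a b : k, α (a + b) = α a + α b) ∧
      (∀ a b : k, α (a * b) = α b * α a) := by
  by_cases hcomm : ∀ a b : k, a * b = b * a
  · exact ⟨id, Function.bijective_id, fun a b => rfl, fun a b => (hcomm a b : _)⟩
  · push_neg at hcomm
    obtain ⟨ca, cb, hc⟩ := hcomm
    have hnc : ∃ a : k, ¬ isC a := ⟨ca, fun h => hc (h cb)⟩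
    set g : k × k → k × k := fun x => -f 0 + f x with hgdef
    have hgbij : Function.Bijective g := by
      have hcomp : g = (fun y => -f 0 + y) ∘ f := rfl
      rw [hcomp]
      exact (Equiv.addLeft (-f 0)).bijective.comp hbij
    have hg0 : g 0 = 0 := by simp [hgdef]
    have hgpure : ∀ L : Set (k × k), IsLeftAffLine L → ¬ IsRightAffLine L →
        IsRightAffLine (g '' L) := by
      intro L hL hnR
      have himg : g '' L = (fun y => -f 0 + y) '' (f '' L) := by
        rw [← Set.image_comp]; rfl
      rw [himg]
      exact isRight_translate _ (hpure L hL hnR).1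
    obtain ⟨c, hcprime⟩ := id hnc
    have hu : goodd ((1 : k), c) := ⟨one_ne_zero, by rw [inv_one, one_mul]; exact hcprime⟩
    refine ⟨sig g ((1 : k), c), ⟨sig_inj hgbij hg0 hgpure hu, sig_surj hgbij hg0 hgpure hu⟩,
      fun a b => sig_add hgbij hg0 hgpure hnc hu a b,
      fun a b => sig_antimul hgbij hg0 hgpure hnc hu a b⟩
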